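/- Let κ be an infinite cardinal and (α_i)_{i∈κ} countable ordinals with α_i ≥ 2 for all i. Then the least ordinal β such that β → (top α_i)^1_{i∈κ} is κ⁺. That is: κ⁺ → (top α_i)^1_{i∈κ}, and no ordinal below κ⁺ satisfies this relation. -/

import Mathlib

open Set Ordinal
open scoped Cardinal

universe u

/-- Natural (Hessenberg) addition of ordinals, as in Mathlib's former `Ordinal.nadd`. -/
noncomputable def Ordinal.nadd : Ordinal.{u} → Ordinal.{u} → Ordinal.{u}
  | a, b =>
    max (blsub.{u, u} a fun a' _ => Ordinal.nadd a' b) (blsub.{u, u} b fun b' _ => Ordinal.nadd a b')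
termination_by o₁ o₂ => (o₁, o₂)

infixl:65 " ♯ " => Ordinal.nadd

noncomputable section

/-- Derived set (non-isolated points) of a set of ordinals, as a subspace. -/
def deriv' (s : Set Ordinal.{0}) : Set Ordinal.{0} := {x ∈ s | x ∈ closure (s \ {x})}

/-- Iterated Cantor–Bendixson derivative. -/
def iterDeriv (s : Set Ordinal.{0}) (o : Ordinal.{0}) : Set Ordinal.{0} :=
  Ordinal.limitRecOn o s (fun _ ih => deriv' ih) (fun o _ ih => ⋂ (p : Ordinal.{0}) (h : p < o), ih p h)

/-- `s` contains a homeomorphic copy of the ordinal `α` (with its order topology). -/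
def HomeoCopy (α : Ordinal.{0}) (s : Set Ordinal.{0}) : Prop :=
  ∃ t : Set Ordinal, t ⊆ s ∧ Nonempty ((Iio α : Set Ordinal.{0}) ≃ₜ t)

/-- Two ordinals are biembeddable: each is homeomorphic to a subspace of the other. -/
def Biembed (α β : Ordinal.{0}) : Prop := HomeoCopy α (Iio β) ∧ HomeoCopy β (Iio α)

/-- Two sets of ordinals are order-homeomorphic: there is an order-preserving homeomorphism. -/
def OrderHomeo (X Y : Set Ordinal.{0}) : Prop :=
  ∃ e : X ≃ₜ Y, ∀ a b : X, a ≤ b ↔ e a ≤ e b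

/-- An ordinal is order-reinforcing. -/
def OrderReinforcing (α : Ordinal.{0}) : Prop :=
  ∀ X : Set Ordinal, Nonempty ((Iio α : Set Ordinal.{0}) ≃ₜ X) → ∃ Y ⊆ X, OrderHomeo (Iio α) Y

/-- The Cantor–Bendixson rank of an ordinal: the least exponent in its Cantor normal form. -/
def CB (x : Ordinal.{0}) : Ordinal := if x = 0 then 0 else sSup {γ | (ω : Ordinal.{0}) ^ γ ∣ x}

/-- The natural (Hessenberg) sum of a finite family of ordinals. -/
def natSumFam {k : ℕ} (α : Fin k → Ordinal.{0}) : Ordinal := (List.ofFn α).foldr (· ♯ ·) 0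

/-- The Milner–Rado sum of a finite family of ordinals. -/
def mrSumFam {k : ℕ} (α : Fin k → Ordinal.{0}) : Ordinal :=
  sInf {δ | ∀ β : Fin k → Ordinal, (∀ i, β i < α i) → δ ≠ natSumFam β}

/-- The topological pigeonhole relation `β → (top α i)¹` for finitely many colours. -/
def TopPH {k : ℕ} (β : Ordinal.{0}) (α : Fin k → Ordinal.{0}) : Prop :=
  ∀ c : Ordinal → Fin k, ∃ i, HomeoCopy (α i) (Iio β ∩ c ⁻¹' {i})

/-- The topological pigeonhole relation with an arbitrary index type of colours. -/
def TopPHFam {ι : Type*} (β : Ordinal.{0}) (α : ι → Ordinal.{0}) : Prop :=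
  ∀ c : Ordinal → ι, ∃ i, HomeoCopy (α i) (Iio β ∩ c ⁻¹' {i})

/-- `ω̄[γ, m]`: `ω ^ γ * m + 1` if `γ > 0`, and `m` if `γ = 0`. -/
def obar (γ : Ordinal.{0}) (m : ℕ) : Ordinal := if γ = 0 then (m : Ordinal.{0}) else ω ^ γ * m + 1

/-- `C` is closed and unbounded in `o`. -/
def IsClubIn (C : Set Ordinal.{0}) (o : Ordinal.{0}) : Prop :=
  C ⊆ Iio o ∧ (∀ x < o, ∃ y ∈ C, x ≤ y) ∧
    ∀ x < o, x ≠ 0 → (∀ y < x, ∃ z ∈ C, y < z ∧ z < x) → x ∈ C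

/-- `S` is stationary in `o`: it meets every club subset of `o`. -/
def StationaryIn (S : Set Ordinal.{0}) (o : Ordinal.{0}) : Prop :=
  ∀ C, IsClubIn C o → (S ∩ C).Nonempty


namespace Ordinal

/-- Limit ordinals, in the form of Mathlib's former `Ordinal.IsLimit`. -/
def IsLimit (o : Ordinal.{0}) : Prop := o ≠ 0 ∧ ∀ a < o, Order.succ a < o

theorem IsLimit.pos {o : Ordinal.{0}} (h : o.IsLimit) : 0 < o := pos_iff_ne_zero.2 h.1

theorem IsLimit.succ_lt {o a : Ordinal.{0}} (h : o.IsLimit) (ha : a < o) : Order.succ a < o :=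
  h.2 a ha

theorem isLimit_iff_isSuccLimit' {o : Ordinal.{0}} : o.IsLimit ↔ Order.IsSuccLimit o := by
  rw [Ordinal.isSuccLimit_iff, Order.isSuccPrelimit_iff_succ_lt]; rfl

end Ordinal

namespace TopPHAux

open Cardinal

/-! ### Basic ordinal helpers -/

theorem sub_mono_left {a b c : Ordinal.{0}} (h : a ≤ b) : a - c ≤ b - c :=
  Ordinal.sub_le.2 (h.trans (Ordinal.le_add_sub b c))

theorem sub_one_of_limit {z : Ordinal.{0}} (h : z.IsLimit) : z - 1 = z := by
  conv_lhs => rw [← Ordinal.one_add_of_omega0_le (Ordinal.omega0_le_of_isSuccLimit (Ordinal.isLimit_iff_isSuccLimit'.1 h))]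
  exact Ordinal.add_sub_cancel 1 z

/-- A cofinal `ω`-sequence in an ordinal of cofinality `ℵ₀`. -/
theorem exists_omega_cofinal {o : Ordinal.{0}} (hc : o.cof = ℵ₀) :
    ∃ ρ : ℕ → Ordinal.{0}, (∀ n, ρ n < o) ∧ ∀ y < o, ∃ n, y ≤ ρ n := by
  obtain ⟨f, hf⟩ := Ordinal.exists_fundamental_sequence o
  have hord : o.cof.ord = (ω : Ordinal.{0}) := by rw [hc, Cardinal.ord_aleph0]
  refine ⟨fun n => f n (by rw [hord]; exact Ordinal.nat_lt_omega0 n),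
    fun n => hf.lt _, fun y hy => ?_⟩
  have h1 : y < Ordinal.blsub _ f := by rw [hf.blsub_eq]; exact hy
  rw [Ordinal.lt_blsub_iff] at h1
  obtain ⟨i, hi, hyi⟩ := h1
  obtain ⟨n, rfl⟩ := Ordinal.lt_omega0.1 (hord ▸ hi)
  exact ⟨n, hyi⟩

/-- A strictly increasing cofinal `ω`-sequence starting at `0`. -/
theorem exists_strict_cofinal {o : Ordinal.{0}} (ho : o.IsLimit) (hc : o.cof = ℵ₀) :
    ∃ ξ : ℕ → Ordinal.{0}, StrictMono ξ ∧ ξ 0 = 0 ∧ (∀ n, ξ n < o) ∧ ∀ y < o, ∃ n, y < ξ (n + 1) := by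
  obtain ⟨ρ, hρ, hρc⟩ := exists_omega_cofinal hc
  refine ⟨fun n => Nat.rec 0 (fun n ih => max (ρ n) ih + 1) n, ?_, rfl, ?_, ?_⟩
  · exact strictMono_nat_of_lt_succ fun n =>
      lt_of_le_of_lt (le_max_right _ _) (Order.lt_succ _)
  · intro n
    induction n with
    | zero => exact ho.pos
    | succ n ih =>
      have h1 : max (ρ n) (Nat.rec 0 (fun n ih => max (ρ n) ih + 1) n) < o := max_lt (hρ n) ih
      simpa using ho.succ_lt h1
  · intro y hy
    obtain ⟨n, hn⟩ := hρc y hy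
    exact ⟨n, lt_of_le_of_lt hn (lt_of_le_of_lt (le_max_left _ _) (Order.lt_succ _))⟩


/-! ### Clubs and stationary sets -/

section Clubs

variable {v : Ordinal.{0}} (hv : ℵ₀ < v.cof)

theorem nu_isLimit (hv : ℵ₀ < v.cof) : v.IsLimit := by
  refine Ordinal.isLimit_iff_isSuccLimit'.2 (Ordinal.aleph0_le_cof.1 hv.le)

include hv

/-- The supremum of an `ω`-chain below `v` is below `v`. -/
theorem omega_sup_lt {x : ℕ → Ordinal.{0}} (hx : ∀ n, x n < v) : (⨆ n, x n) < v := by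
  apply Ordinal.iSup_lt_ord _ hx
  rwa [Cardinal.mk_eq_aleph0]

theorem clubIn_Iio : IsClubIn (Iio v) v :=
  ⟨Subset.rfl, fun x hx => ⟨x, hx, le_rfl⟩, fun x hx _ _ => hx⟩

theorem clubIn_inter_Ioi {γ : Ordinal.{0}} (hγ : γ < v) : IsClubIn (Iio v ∩ Ioi γ) v := by
  refine ⟨inter_subset_left, fun x hx => ?_, fun x hx hx0 hacc => ?_⟩
  · refine ⟨max x (γ + 1), ⟨?_, ?_⟩, le_max_left _ _⟩
    · exact max_lt hx (by simpa using (nu_isLimit hv).succ_lt hγ)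
    · exact lt_of_lt_of_le (lt_of_le_of_lt le_rfl (Order.lt_succ γ))
        (by simpa using le_max_right x (γ + 1))
  · refine ⟨hx, ?_⟩
    obtain ⟨z, hz, hyz, hzx⟩ := hacc 0 (pos_iff_ne_zero.2 hx0)
    exact lt_trans hz.2 hzx

/-- Intersection of a small family of clubs is a club. -/
theorem clubIn_iInter {σ : Type} [Nonempty σ] {C : σ → Set Ordinal.{0}}
    (hσ : #σ < v.cof) (h : ∀ j, IsClubIn (C j) v) : IsClubIn (⋂ j, C j) v := by
  have hlim := nu_isLimit hv
  refine ⟨fun y hy => (h (Classical.arbitrary σ)).1 (mem_iInter.1 hy _), ?_, ?_⟩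
  · -- unboundedness
    intro x hx
    have step : ∀ p < v, ∀ j : σ, ∃ z ∈ C j, p < z ∧ z < v := by
      intro p hp j
      obtain ⟨z, hz, hpz⟩ := (h j).2.1 (p + 1)
        (by simpa using hlim.succ_lt hp)
      exact ⟨z, hz, lt_of_lt_of_le (Order.lt_succ p) (by simpa using hpz),
        (h j).1 hz⟩
    -- pick function
    have pick : ∀ p : Ordinal.{0}, ∃ q : σ → Ordinal.{0}, p < v →
        ∀ j, q j ∈ C j ∧ p < q j ∧ q j < v := by
      intro p
      by_cases hp : p < v
      · choose q hq1 hq2 hq3 using step p hp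
        exact ⟨q, fun _ j => ⟨hq1 j, hq2 j, hq3 j⟩⟩
      · exact ⟨fun _ => 0, fun hp' => absurd hp' hp⟩
    choose q hq using pick
    have stp : ∀ p < v, (⨆ j, q p j) + 1 < v := by
      intro p hp
      have h1 : (⨆ j, q p j) < v := Ordinal.iSup_lt_ord hσ fun j => (hq p hp j).2.2
      simpa using hlim.succ_lt h1
    set F : Ordinal.{0} → Ordinal.{0} := fun p => (⨆ j, q p j) + 1 with hF
    set x' : ℕ → Ordinal.{0} := fun n => Nat.rec x (fun _ ih => F ih) n with hx'
    have hx'lt : ∀ n, x' n < v := by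
      intro n; induction n with
      | zero => exact hx
      | succ n ih => exact stp _ ih
    have hx'mono : ∀ n, x' n < x' (n + 1) := by
      intro n
      have h1 : q (x' n) (Classical.arbitrary σ) ≤ ⨆ j, q (x' n) j :=
        le_ciSup (Ordinal.bddAbove_range _) _
      calc x' n < q (x' n) (Classical.arbitrary σ) := (hq _ (hx'lt n) _).2.1
        _ ≤ ⨆ j, q (x' n) j := h1
        _ < x' (n + 1) := Order.lt_succ _
    set xs := ⨆ n, x' n with hxs
    have hxslt : xs < v := omega_sup_lt hv hx'lt
    have hle : ∀ n, x' n ≤ xs := fun n => le_ciSup (Ordinal.bddAbove_range _) n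
    refine ⟨xs, mem_iInter.2 fun j => ?_, le_trans (hle 0) le_rfl⟩
    refine (h j).2.2 xs hxslt ?_ ?_
    · have : x' 0 < xs := lt_of_lt_of_le (hx'mono 0) (hle 1)
      exact fun h0 => by simp [h0] at this
    · intro y hy
      obtain ⟨n, hn⟩ : ∃ n, y < x' n := by
        by_contra hcon
        push_neg at hcon
        exact absurd (ciSup_le hcon) (not_le.2 hy)
      refine ⟨q (x' n) j, (hq _ (hx'lt n) j).1, lt_trans hn (hq _ (hx'lt n) j).2.1, ?_⟩
      calc q (x' n) j ≤ ⨆ j', q (x' n) j' := le_ciSup (Ordinal.bddAbove_range _) _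
        _ < x' (n + 1) := Order.lt_succ _
        _ ≤ xs := hle (n + 1)
  · -- closedness
    intro x hx hx0 hacc
    refine mem_iInter.2 fun j => (h j).2.2 x hx hx0 fun y hy => ?_
    obtain ⟨z, hz, h1, h2⟩ := hacc y hy
    exact ⟨z, mem_iInter.1 hz j, h1, h2⟩

theorem clubIn_inter {C D : Set Ordinal.{0}} (hC : IsClubIn C v) (hD : IsClubIn D v) :
    IsClubIn (C ∩ D) v := by
  have h2 : (2 : Cardinal.{0}) < v.cof := lt_of_lt_of_le (by exact_mod_cast Cardinal.nat_lt_aleph0 2) hv.le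
  have := clubIn_iInter hv (σ := Bool) (C := fun b => bif b then C else D)
    (by simpa using h2) (by rintro (_|_) <;> simpa)
  convert this using 1
  ext x
  simp [Set.mem_iInter, Bool.forall_bool, and_comm]

theorem stationary_mono {S S' : Set Ordinal.{0}} (h : S ⊆ S') (hS : StationaryIn S v) :
    StationaryIn S' v := fun C hC => (hS C hC).imp fun x hx => ⟨h hx.1, hx.2⟩

theorem stationary_nonempty {S : Set Ordinal.{0}} (hS : StationaryIn S v) : S.Nonempty := by
  obtain ⟨x, hx, _⟩ := hS _ (clubIn_Iio hv)
  exact ⟨x, hx⟩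

theorem stationary_inter_club {S C : Set Ordinal.{0}} (hS : StationaryIn S v)
    (hC : IsClubIn C v) : StationaryIn (S ∩ C) v := by
  intro D hD
  obtain ⟨x, hx1, hx2⟩ := hS _ (clubIn_inter hv hC hD)
  exact ⟨x, ⟨⟨hx1, hx2.1⟩, hx2.2⟩⟩

theorem stationary_unbounded {S : Set Ordinal.{0}} (hS : StationaryIn S v) :
    ∀ γ < v, ∃ z ∈ S, γ < z ∧ z < v := by
  intro γ hγ
  obtain ⟨z, hz1, hz2, hz3⟩ := hS _ (clubIn_inter_Ioi hv hγ)
  exact ⟨z, hz1, hz3, hz2⟩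

/-- An `ω`-chain inside a set with all elements above `x₀`; its sup is an accumulation point. -/
theorem exists_omega_chain {T : Set Ordinal.{0}}
    (hT : ∀ γ < v, ∃ z ∈ T, γ < z ∧ z < v) {x : Ordinal.{0}} (hx : x < v) :
    ∃ w : Ordinal.{0}, w < v ∧ x < w ∧ w ≠ 0 ∧ w.cof = ℵ₀ ∧
      ∀ y < w, ∃ z ∈ T, y < z ∧ z < w := by
  have pick : ∀ p : Ordinal.{0}, ∃ z : Ordinal.{0}, p < v → z ∈ T ∧ p < z ∧ z < v := by
    intro p
    by_cases hp : p < v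
    · obtain ⟨z, h1, h2, h3⟩ := hT p hp
      exact ⟨z, fun _ => ⟨h1, h2, h3⟩⟩
    · exact ⟨0, fun hp' => absurd hp' hp⟩
  choose F hF using pick
  set x' : ℕ → Ordinal.{0} := fun n => Nat.rec (F x) (fun _ ih => F ih) n with hx'
  have hx'0 : x' 0 = F x := rfl
  have hx'lt : ∀ n, x' n < v := by
    intro n; induction n with
    | zero => exact (hF x hx).2.2
    | succ n ih => exact (hF _ ih).2.2
  have hx'T : ∀ n, x' n ∈ T := by
    intro n; cases n with
    | zero => exact (hF x hx).1
    | succ n => exact (hF _ (hx'lt n)).1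
  have hx'mono : ∀ n, x' n < x' (n + 1) := fun n => (hF _ (hx'lt n)).2.1
  have hmono : StrictMono x' := strictMono_nat_of_lt_succ hx'mono
  set w := ⨆ n, x' n with hw
  have hle : ∀ n, x' n ≤ w := fun n => le_ciSup (Ordinal.bddAbove_range _) n
  have hwv : w < v := omega_sup_lt hv hx'lt
  have hxw : x < w := lt_of_lt_of_le (hF x hx).2.1 (hle 0)
  have hcofin : ∀ y < w, ∃ n, y < x' n := by
    intro y hy
    by_contra hcon
    push_neg at hcon
    exact absurd (ciSup_le hcon) (not_le.2 hy)
  have hacc : ∀ y < w, ∃ z ∈ T, y < z ∧ z < w := by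
    intro y hy
    obtain ⟨n, hn⟩ := hcofin y hy
    exact ⟨x' n, hx'T n, hn, lt_of_lt_of_le (hx'mono n) (hle (n + 1))⟩
  have hwlim : w.IsLimit := by
    refine ⟨?_, fun a ha => ?_⟩
    · intro h0
      have := hxw
      rw [h0] at this
      exact not_lt_zero this
    · obtain ⟨n, hn⟩ := hcofin a ha
      have : a + 1 ≤ x' n := by simpa [Order.succ_le_iff] using hn
      calc Order.succ a = a + 1 := (Ordinal.add_one_eq_succ a).symm
        _ ≤ x' n := this
        _ < x' (n + 1) := hx'mono n
        _ ≤ w := hle (n + 1)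
  have hcof : w.cof = ℵ₀ := by
    apply le_antisymm
    · have h1 : ∀ n, x' n < ⨆ n, x' n := fun n => lt_of_lt_of_le (hx'mono n) (hle (n + 1))
      have := Ordinal.cof_iSup_le h1
      simpa [Cardinal.mk_eq_aleph0] using this
    · exact Ordinal.aleph0_le_cof.2 (Ordinal.isLimit_iff_isSuccLimit'.1 hwlim)
  exact ⟨w, hwv, hxw, hwlim.1, hcof, hacc⟩

/-- Points of cofinality `ω` are stationary. -/
theorem stationary_cof_omega : StationaryIn {x : Ordinal.{0} | x < v ∧ x.cof = ℵ₀} v := by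
  intro C hC
  have hub : ∀ γ < v, ∃ z ∈ C, γ < z ∧ z < v := by
    intro γ hγ
    obtain ⟨z, hz, hγz⟩ := hC.2.1 (γ + 1)
      (by simpa using (nu_isLimit hv).succ_lt hγ)
    exact ⟨z, hz, lt_of_lt_of_le (Order.lt_succ γ)
      (by simpa using hγz), hC.1 hz⟩
  obtain ⟨w, hwv, _, hw0, hwcof, hacc⟩ := exists_omega_chain hv hub ((nu_isLimit hv).pos)
  have hwC : w ∈ C := hC.2.2 w hwv hw0 hacc
  exact ⟨w, ⟨hwv, hwcof⟩, hwC⟩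

/-- Accumulation points of a stationary set form a club. -/
theorem clubIn_acc {T : Set Ordinal.{0}} (hT : StationaryIn T v) :
    IsClubIn {x : Ordinal.{0} | x ∈ Iio v ∧ x ≠ 0 ∧ ∀ y < x, ∃ z ∈ T, y < z ∧ z < x} v := by
  refine ⟨fun y hy => hy.1, ?_, ?_⟩
  · intro x hx
    obtain ⟨w, hwv, hxw, hw0, _, hacc⟩ := exists_omega_chain hv (stationary_unbounded hv hT) hx
    exact ⟨w, ⟨hwv, hw0, hacc⟩, hxw.le⟩
  · intro x hx hx0 hacc
    refine ⟨hx, hx0, fun y hy => ?_⟩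
    obtain ⟨z, hz, hyz, hzx⟩ := hacc y hy
    obtain ⟨z', hz', hyz', hz'z⟩ := hz.2.2 y hyz
    exact ⟨z', hz', hyz', lt_trans hz'z hzx⟩

/-- Pigeonhole: some colour class is stationary on the cofinality-`ω` points. -/
theorem exists_stationary_fiber {ι : Type} [Nonempty ι] (hι : #ι < v.cof)
    (c : Ordinal.{0} → ι) :
    ∃ i, StationaryIn ({x : Ordinal.{0} | x < v ∧ x.cof = ℵ₀} ∩ c ⁻¹' {i}) v := by
  by_contra hcon
  push_neg at hcon
  have hclub : ∀ i, ∃ C, IsClubIn C v ∧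
      ({x : Ordinal.{0} | x < v ∧ x.cof = ℵ₀} ∩ c ⁻¹' {i}) ∩ C = ∅ := by
    intro i
    have := hcon i
    rw [StationaryIn] at this
    push_neg at this
    obtain ⟨C, hC1, hC2⟩ := this
    exact ⟨C, hC1, hC2⟩
  choose C hC1 hC2 using hclub
  have hCint : IsClubIn (⋂ i, C i) v := clubIn_iInter hv hι hC1
  obtain ⟨x, hx1, hx2⟩ := stationary_cof_omega hv _ hCint
  have : x ∈ ({y : Ordinal.{0} | y < v ∧ y.cof = ℵ₀} ∩ c ⁻¹' {c x}) ∩ C (c x) :=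
    ⟨⟨hx1, rfl⟩, mem_iInter.1 hx2 _⟩
  rw [hC2 (c x)] at this
  exact this

end Clubs


/-! ### Chains and the main induction -/

/-- A "chain of type `Iic a`" inside `S`, strictly above `γ`, ending at `δ`. -/
def IsChain' (S : Set Ordinal.{0}) (γ δ a : Ordinal.{0}) (f : Ordinal.{0} → Ordinal.{0}) : Prop :=
  StrictMonoOn f (Iic a) ∧ (∀ l ≤ a, l.IsLimit → f l = sSup (f '' Iio l)) ∧
    (∀ x ≤ a, f x ∈ S ∧ γ < f x ∧ f x ≤ δ) ∧ f a = δ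

/-- The set of `δ ∈ S` approachable by `a`-chains from arbitrarily high below `δ`. -/
def Tset (a : Ordinal.{0}) (S : Set Ordinal.{0}) : Set Ordinal.{0} :=
  {δ ∈ S | ∀ γ < δ, ∃ f, IsChain' S γ δ a f}

theorem mem_Tset {a S δ} : δ ∈ Tset a S ↔ δ ∈ S ∧ ∀ γ < δ, ∃ f, IsChain' S γ δ a f :=
  Iff.rfl

theorem stationary_Tset {v : Ordinal.{0}} (hv : ℵ₀ < v.cof)
    {S : Set Ordinal.{0}} (hS : S ⊆ {x | x < v ∧ x.cof = ℵ₀}) (hstat : StationaryIn S v) :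
    ∀ a : Ordinal.{0}, a.card ≤ ℵ₀ → StationaryIn (Tset a S) v := by
  intro a
  induction a using Ordinal.induction with
  | h a IH =>
  intro hcard
  classical
  rcases (Ordinal.zero_or_succ_or_isSuccLimit a).imp_right (Or.imp_right Ordinal.isLimit_iff_isSuccLimit'.2) with rfl | ⟨b, rfl⟩ | hlim
  · -- zero case
    refine stationary_mono hv ?_ hstat
    intro δ hδ
    refine mem_Tset.2 ⟨hδ, fun γ hγ => ⟨fun _ => δ, ?_, ?_, fun _ _ => ⟨hδ, hγ, le_rfl⟩, rfl⟩⟩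
    · intro x hx y hy hxy
      exact absurd (lt_of_lt_of_le hxy hy) (not_lt_zero (a := x))
    · intro l hl hliml
      have h0 : l = 0 := nonpos_iff_eq_zero.1 hl
      subst h0
      exact absurd rfl hliml.1
  · -- successor case
    have hbcard : b.card ≤ ℵ₀ := le_trans (Ordinal.card_le_card (Order.le_succ b)) hcard
    have hTb := IH b (Order.lt_succ b) hbcard
    intro C hC
    have hD := clubIn_acc hv hTb
    obtain ⟨δ, hδS, hδC, hδD⟩ : ∃ δ, δ ∈ S ∧ δ ∈ C ∧
        δ ∈ {x : Ordinal.{0} | x ∈ Iio v ∧ x ≠ 0 ∧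
          ∀ y < x, ∃ z ∈ Tset b S, y < z ∧ z < x} := by
      obtain ⟨δ, hδ1, hδ2⟩ := hstat _ (clubIn_inter hv hC hD)
      exact ⟨δ, hδ1, hδ2.1, hδ2.2⟩
    refine ⟨δ, mem_Tset.2 ⟨hδS, fun γ hγ => ?_⟩, hδC⟩
    obtain ⟨δ', hδ'T, hγδ', hδ'δ⟩ := hδD.2.2 γ hγ
    obtain ⟨g, hg⟩ := (mem_Tset.1 hδ'T).2 γ hγδ'
    have hnsucc : ∀ x : Ordinal.{0}, x ≤ b → x ≠ Order.succ b :=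
      fun x hx h => absurd (h ▸ hx) (not_le.2 (Order.lt_succ b))
    set F : Ordinal.{0} → Ordinal.{0} := fun x => if x = Order.succ b then δ else g x with hF
    have hFs : F (Order.succ b) = δ := by simp only [hF, if_pos rfl]
    have hFg : ∀ x, x ≤ b → F x = g x := by
      intro x hx
      simp only [hF]
      rw [if_neg (hnsucc x hx)]
    refine ⟨F, ?_, ?_, ?_, hFs⟩
    · intro x hx y hy hxy
      have hy' : y ≤ Order.succ b := hy
      rcases eq_or_lt_of_le hy' with hya | hya
      · have hxb : x ≤ b := Order.lt_succ_iff.1 (hya ▸ hxy)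
        rw [hya, hFs, hFg x hxb]
        exact lt_of_le_of_lt (hg.2.2.1 x hxb).2.2 hδ'δ
      · have hyb : y ≤ b := Order.lt_succ_iff.1 hya
        have hxb : x ≤ b := le_trans hxy.le hyb
        rw [hFg x hxb, hFg y hyb]
        exact hg.1 hxb hyb hxy
    · intro l hl hliml
      have hlb : l ≤ b := by
        rcases eq_or_lt_of_le hl with h | h
        · exact absurd (h ▸ hliml : (Order.succ b).IsLimit)
            (fun hh => absurd (hh.2 b (Order.lt_succ b)) (lt_irrefl _))
        · exact Order.lt_succ_iff.1 h
      have himg : F '' Iio l = g '' Iio l := by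
        apply image_congr
        intro x hxl
        exact hFg x (le_trans (le_of_lt hxl) hlb)
      rw [himg, hFg l hlb]
      exact hg.2.1 l hlb hliml
    · intro x hx
      rcases eq_or_lt_of_le hx with h | h
      · rw [h, hFs]
        exact ⟨hδS, hγ, le_rfl⟩
      · have hxb : x ≤ b := Order.lt_succ_iff.1 h
        rw [hFg x hxb]
        obtain ⟨h1, h2, h3⟩ := hg.2.2.1 x hxb
        exact ⟨h1, h2, le_trans h3 hδ'δ.le⟩
  · -- limit case
    have hcof : a.cof = ℵ₀ :=
      le_antisymm ((Ordinal.cof_le_card a).trans hcard) (Ordinal.aleph0_le_cof.2 (Ordinal.isLimit_iff_isSuccLimit'.1 hlim))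
    obtain ⟨ξ, hξmono, hξ0, hξlt, hξcof⟩ := exists_strict_cofinal hlim hcof
    set B : ℕ → Ordinal.{0} := fun n => match n with
      | 0 => ξ 1
      | (m+1) => (ξ (m+2) - ξ (m+1)) - 1 with hB
    have hBlt : ∀ n, B n < a := by
      intro n; cases n with
      | zero => exact hξlt 1
      | succ m =>
        have h1 : (ξ (m+2) - ξ (m+1)) - 1 ≤ ξ (m+2) - ξ (m+1) := Ordinal.sub_le_self _ _
        have h2 : ξ (m+2) - ξ (m+1) ≤ ξ (m+2) := Ordinal.sub_le_self _ _
        exact lt_of_le_of_lt (h1.trans h2) (hξlt (m+2))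
    have hTB : ∀ n, StationaryIn (Tset (B n) S) v := fun n =>
      IH (B n) (hBlt n) (le_trans (Ordinal.card_le_card (hBlt n).le) hcard)
    intro C hC
    have hD : ∀ n : ℕ, IsClubIn {x : Ordinal.{0} | x ∈ Iio v ∧ x ≠ 0 ∧
        ∀ y < x, ∃ z ∈ Tset (B n) S, y < z ∧ z < x} v := fun n => clubIn_acc hv (hTB n)
    have hDint := clubIn_iInter hv (σ := ℕ)
      (by rw [Cardinal.mk_eq_aleph0]; exact hv) hD
    obtain ⟨δ, hδS, hδCD⟩ := hstat _ (clubIn_inter hv hC hDint)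
    obtain ⟨hδC, hδD⟩ := hδCD
    have hδv : δ < v := (hS hδS).1
    have hδcof : δ.cof = ℵ₀ := (hS hδS).2
    obtain ⟨ρ, hρlt, hρcof⟩ := exists_omega_cofinal hδcof
    refine ⟨δ, mem_Tset.2 ⟨hδS, fun γ hγ => ?_⟩, hδC⟩
    have hstep : ∀ n : ℕ, ∀ p < δ, ∃ z, z ∈ Tset (B n) S ∧ p < z ∧ z < δ := by
      intro n p hp
      obtain ⟨z, hz, h1, h2⟩ := (mem_iInter.1 hδD n).2.2 p hp
      exact ⟨z, hz, h1, h2⟩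
    have pick : ∀ (n : ℕ) (p : Ordinal.{0}), ∃ z : Ordinal.{0}, p < δ →
        z ∈ Tset (B n) S ∧ p < z ∧ z < δ := by
      intro n p
      by_cases hp : p < δ
      · obtain ⟨z, h⟩ := hstep n p hp; exact ⟨z, fun _ => h⟩
      · exact ⟨0, fun h => absurd h hp⟩
    choose P hP using pick
    set d : ℕ → Ordinal.{0} := fun n => Nat.rec (P 0 (max γ (ρ 0)))
        (fun n ih => P (n+1) (max ih (ρ (n+1)))) n with hd
    have hdlt : ∀ n, d n < δ := by
      intro n; induction n with
      | zero => exact (hP 0 _ (max_lt hγ (hρlt 0))).2.2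
      | succ n ih => exact (hP (n+1) _ (max_lt ih (hρlt (n+1)))).2.2
    have hdT : ∀ n, d n ∈ Tset (B n) S := by
      intro n; cases n with
      | zero => exact (hP 0 _ (max_lt hγ (hρlt 0))).1
      | succ n => exact (hP (n+1) _ (max_lt (hdlt n) (hρlt (n+1)))).1
    have hdγ : γ < d 0 := lt_of_le_of_lt (le_max_left _ _) (hP 0 _ (max_lt hγ (hρlt 0))).2.1
    have hdρ : ∀ n, ρ n < d n := by
      intro n; cases n with
      | zero => exact lt_of_le_of_lt (le_max_right _ _) (hP 0 _ (max_lt hγ (hρlt 0))).2.1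
      | succ n =>
        exact lt_of_le_of_lt (le_max_right (d n) (ρ (n+1))) (hP (n+1) _ (max_lt (hdlt n) (hρlt (n+1)))).2.1
    have hdmono : ∀ n, d n < d (n+1) := fun n =>
      lt_of_le_of_lt (le_max_left _ _) (hP (n+1) _ (max_lt (hdlt n) (hρlt (n+1)))).2.1
    have hdstrict : StrictMono d := strictMono_nat_of_lt_succ hdmono
    set pv : ℕ → Ordinal.{0} := fun n => match n with | 0 => γ | (m+1) => d m with hpv
    have hpvlt : ∀ n, pv n < d n := by
      intro n; cases n with
      | zero => exact hdγ
      | succ m => exact hdmono m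
    have hγpv : ∀ n, γ ≤ pv n := by
      intro n; cases n with
      | zero => exact le_rfl
      | succ m => exact le_trans hdγ.le (hdstrict.monotone (Nat.zero_le m))
    have hchains : ∀ n, ∃ g, IsChain' S (pv n) (d n) (B n) g := fun n =>
      (mem_Tset.1 (hdT n)).2 (pv n) (hpvlt n)
    choose G hG using hchains
    -- the gluing
    have hex : ∀ x, x < a → ∃ n : ℕ, x ≤ ξ (n+1) := by
      intro x hx
      obtain ⟨n, hn⟩ := hξcof x hx
      exact ⟨n, hn.le⟩
    set N : ∀ x, x < a → ℕ := fun x hx => Nat.find (hex x hx) with hN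
    have hNspec : ∀ x hx, x ≤ ξ (N x hx + 1) := fun x hx => Nat.find_spec (hex x hx)
    have hNpos : ∀ x hx m, N x hx = m + 1 → ξ (m+1) < x := by
      intro x hx m hm
      have hm' : m < N x hx := by omega
      have h2 := Nat.find_min (hex x hx) (show m < Nat.find (hex x hx) from hm')
      exact not_le.1 h2
    have hNmono : ∀ x y hx hy, x ≤ y → N x hx ≤ N y hy := fun x y hx hy hxy =>
      Nat.find_min' _ (hxy.trans (hNspec y hy))
    have hNxi : ∀ n (h : ξ (n+1) < a), N (ξ (n+1)) h = n := by
      intro n h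
      apply le_antisymm
      · exact Nat.find_min' (hex (ξ (n+1)) h) le_rfl
      · by_contra hcon
        push_neg at hcon
        have h1 := hNspec (ξ (n+1)) h
        have h2 : ξ (N (ξ (n+1)) h + 1) < ξ (n+1) := hξmono (by omega)
        exact absurd h1 (not_le.2 h2)
    set idx : ℕ → Ordinal.{0} → Ordinal.{0} := fun n x => match n with
      | 0 => x | (m+1) => (x - ξ (m+1)) - 1 with hidx
    set f : Ordinal.{0} → Ordinal.{0} := fun x =>
      if hx : x < a then G (N x hx) (idx (N x hx) x) else δ with hf
    have hfl : ∀ x (hx : x < a), f x = G (N x hx) (idx (N x hx) x) := by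
      intro x hx
      rw [hf]
      exact dif_pos hx
    have hfa : f a = δ := by rw [hf]; exact dif_neg (lt_irrefl a)
    have hidxle : ∀ x (hx : x < a), idx (N x hx) x ≤ B (N x hx) := by
      intro x hx
      rcases hn : N x hx with _ | m
      · have h1 := hNspec x hx; rw [hn] at h1
        exact h1
      · have h1 := hNspec x hx; rw [hn] at h1
        exact sub_mono_left (sub_mono_left h1)
    have hval : ∀ x (hx : x < a), f x ∈ S ∧ pv (N x hx) < f x ∧ f x ≤ d (N x hx) := by
      intro x hx
      rw [hfl x hx]
      exact (hG (N x hx)).2.2.1 (idx (N x hx) x) (hidxle x hx)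
    have htop : ∀ n (h : ξ (n+1) < a), f (ξ (n+1)) = d n := by
      intro n h
      rw [hfl _ h, hNxi n h]
      cases n with
      | zero =>
        have h1 : idx 0 (ξ 1) = B 0 := rfl
        rw [h1]
        exact (hG 0).2.2.2
      | succ m =>
        have h1 : idx (m+1) (ξ (m+2)) = B (m+1) := rfl
        rw [h1]
        exact (hG (m+1)).2.2.2
    have hsub1 : ∀ w x y : Ordinal.{0}, w < x → x < y → (x - w) - 1 < (y - w) - 1 := by
      intro w x y hwx hxy
      have hwy : w < y := lt_trans hwx hxy
      have hx' : w + (x - w) = x := Ordinal.add_sub_cancel_of_le hwx.le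
      have hy' : w + (y - w) = y := Ordinal.add_sub_cancel_of_le hwy.le
      have huv : x - w < y - w := by
        rw [← add_lt_add_iff_left w, hx', hy']; exact hxy
      have h1u : (1 : Ordinal.{0}) ≤ x - w := by
        rw [Order.one_le_iff_pos, Ordinal.lt_sub]
        simpa using hwx
      have h1v : (1 : Ordinal.{0}) ≤ y - w := h1u.trans huv.le
      have hu : 1 + ((x - w) - 1) = x - w := Ordinal.add_sub_cancel_of_le h1u
      have hvv : 1 + ((y - w) - 1) = y - w := Ordinal.add_sub_cancel_of_le h1v
      rw [← add_lt_add_iff_left 1, hu, hvv]; exact huv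
    have hmono : StrictMonoOn f (Iic a) := by
      intro x hx y hy hxy
      have hy' : y ≤ a := hy
      rcases eq_or_lt_of_le hy' with hya | hya
      · have hxa : x < a := lt_of_lt_of_le hxy (le_of_eq hya)
        rw [hya, hfa]
        exact lt_of_le_of_lt (hval x hxa).2.2 (hdlt _)
      · have hxa : x < a := lt_trans hxy hya
        have hn : N x hxa ≤ N y hya := hNmono x y hxa hya hxy.le
        rcases eq_or_lt_of_le hn with heq | hlt
        · rw [hfl x hxa, hfl y hya, ← heq]
          rcases hm : N x hxa with _ | m
          · have hy1 : y ≤ ξ 1 := by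
              have h1 := hNspec y hya; rw [← heq, hm] at h1; exact h1
            exact (hG 0).1 (le_trans hxy.le hy1 : x ≤ ξ 1) (hy1 : y ≤ ξ 1) hxy
          · have hξx : ξ (m+1) < x := hNpos x hxa m hm
            have hidxy : idx (m+1) y ≤ B (m+1) := by
              have h1 := hidxle y hya; rw [← heq, hm] at h1; exact h1
            have hlt2 : idx (m+1) x < idx (m+1) y := hsub1 (ξ (m+1)) x y hξx hxy
            exact (hG (m+1)).1 (le_trans hlt2.le hidxy) hidxy hlt2
        · have h1 : f x ≤ d (N x hxa) := (hval x hxa).2.2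
          have h2 : pv (N y hya) < f y := (hval y hya).2.1
          rcases hm : N y hya with _ | m
          · rw [hm] at hlt; omega
          · have h3 : d (N x hxa) ≤ d m := hdstrict.monotone (by omega)
            rw [hm] at h2
            exact lt_of_le_of_lt (le_trans h1 h3) h2
    have hcont : ∀ l, l ≤ a → l.IsLimit → f l = sSup (f '' Iio l) := by
      intro l hl hliml
      rcases eq_or_lt_of_le hl with hla | hla
      · -- l = a
        rw [hla, hfa]
        have hbdd : BddAbove (f '' Iio a) := ⟨δ, by
          rintro z ⟨x, hx, rfl⟩
          exact le_trans (hval x hx).2.2 (hdlt _).le⟩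
        have hne : (f '' Iio a).Nonempty := ⟨f 0, 0, hlim.pos, rfl⟩
        apply le_antisymm
        · by_contra hcon
          push_neg at hcon
          obtain ⟨n, hn⟩ := hρcof _ hcon
          have hmem : d n ∈ f '' Iio a := ⟨ξ (n+1), hξlt (n+1), htop n (hξlt (n+1))⟩
          have h2 : d n ≤ sSup (f '' Iio a) := le_csSup hbdd hmem
          exact absurd (h2.trans hn) (not_le.2 (hdρ n))
        · exact csSup_le hne (by
            rintro z ⟨x, hx, rfl⟩
            exact le_trans (hval x hx).2.2 (hdlt _).le)
      · -- l < a
        rcases hm : N l hla with _ | m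
        · have hl1 : l ≤ ξ 1 := by
            have h1 := hNspec l hla; rw [hm] at h1; exact h1
          have himg : f '' Iio l = G 0 '' Iio l := by
            apply image_congr
            intro x hxl
            have hxa : x < a := lt_trans hxl hla
            have hx1 : N x hxa = 0 := by
              have h4 := hNmono x l hxa hla (le_of_lt hxl)
              omega
            rw [hfl x hxa, hx1]
          rw [hfl l hla, hm, himg]
          exact (hG 0).2.1 l hl1 hliml
        · have hξl : ξ (m+1) < l := hNpos l hla m hm
          have hlle : l ≤ ξ (m+2) := by
            have h1 := hNspec l hla; rw [hm] at h1; exact h1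
          have hζ' : ξ (m+1) + (l - ξ (m+1)) = l := Ordinal.add_sub_cancel_of_le hξl.le
          have hζlim : (l - ξ (m+1)).IsLimit := by
            rcases (Ordinal.zero_or_succ_or_isSuccLimit (l - ξ (m+1))).imp_right (Or.imp_right Ordinal.isLimit_iff_isSuccLimit'.2) with h0 | ⟨w, hw⟩ | h
            · rw [h0, add_zero] at hζ'
              exact absurd hζ' (ne_of_lt hξl)
            · rw [← hw, Ordinal.add_succ] at hζ'
              have h2 : (Order.succ (ξ (m+1) + w)).IsLimit := hζ' ▸ hliml
              exact absurd (h2.2 _ (Order.lt_succ _)) (lt_irrefl _)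
            · exact h
          have hζeq : (l - ξ (m+1)) - 1 = l - ξ (m+1) := sub_one_of_limit hζlim
          have hζleB : l - ξ (m+1) ≤ B (m+1) := by
            rw [← hζeq]
            exact sub_mono_left (sub_mono_left hlle)
          have hflval : f l = G (m+1) (l - ξ (m+1)) := by
            rw [hfl l hla, hm]
            show G (m+1) ((l - ξ (m+1)) - 1) = _
            rw [hζeq]
          have hbddζ : BddAbove (G (m+1) '' Iio (l - ξ (m+1))) := ⟨d (m+1), by
            rintro z ⟨η, hη, rfl⟩
            exact ((hG (m+1)).2.2.1 η (le_trans (le_of_lt hη) hζleB)).2.2⟩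
          have hsub : G (m+1) '' Iio (l - ξ (m+1)) ⊆ f '' Iio l := by
            rintro z ⟨η, hη, rfl⟩
            have h1η : 1 + η < l - ξ (m+1) := by
              have h2 : (1 : Ordinal.{0}) + η < 1 + (l - ξ (m+1)) := by
                rw [add_lt_add_iff_left]; exact hη
              rwa [Ordinal.one_add_of_omega0_le (Ordinal.omega0_le_of_isSuccLimit (Ordinal.isLimit_iff_isSuccLimit'.1 hζlim))] at h2
            have hxl : ξ (m+1) + (1 + η) < l := by
              rw [← hζ']
              exact (add_lt_add_iff_left _).2 h1η
            have hxa : ξ (m+1) + (1 + η) < a := lt_trans hxl hla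
            have hξx : ξ (m+1) < ξ (m+1) + (1 + η) := by
              calc ξ (m+1) = ξ (m+1) + 0 := (add_zero _).symm
                _ < ξ (m+1) + (1 + η) := (add_lt_add_iff_left _).2
                    (lt_of_lt_of_le zero_lt_one (le_self_add (a := 1) (b := η)))
            have hNx : N (ξ (m+1) + (1 + η)) hxa = m + 1 := by
              apply le_antisymm
              · have h4 := hNmono (ξ (m+1) + (1 + η)) l hxa hla hxl.le
                omega
              · by_contra hcon
                push_neg at hcon
                have h2 := hNspec (ξ (m+1) + (1 + η)) hxa
                have h3 : ξ (N (ξ (m+1) + (1 + η)) hxa + 1) ≤ ξ (m+1) :=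
                  hξmono.monotone (by omega)
                exact absurd (h2.trans h3) (not_le.2 hξx)
            refine ⟨ξ (m+1) + (1 + η), hxl, ?_⟩
            rw [hfl _ hxa, hNx]
            show G (m+1) ((ξ (m+1) + (1 + η) - ξ (m+1)) - 1) = _
            rw [Ordinal.add_sub_cancel, Ordinal.add_sub_cancel]
          have hupper : ∀ z ∈ f '' Iio l, z ≤ sSup (G (m+1) '' Iio (l - ξ (m+1))) := by
            rintro z ⟨x, hxl, rfl⟩
            have hxa : x < a := lt_trans hxl hla
            have hNle : N x hxa ≤ m + 1 := by
              have h4 := hNmono x l hxa hla hxl.le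
              omega
            rcases eq_or_lt_of_le hNle with heq | hlt'
            · have hξx : ξ (m+1) < x := hNpos x hxa m heq
              have hxζ : x - ξ (m+1) < l - ξ (m+1) := by
                rw [← add_lt_add_iff_left (ξ (m+1)), Ordinal.add_sub_cancel_of_le hξx.le, hζ']
                exact hxl
              have hηx : (x - ξ (m+1)) - 1 < l - ξ (m+1) :=
                lt_of_le_of_lt (Ordinal.sub_le_self _ _) hxζ
              have h4 : f x = G (m+1) ((x - ξ (m+1)) - 1) := by
                rw [hfl x hxa, heq]
              rw [h4]
              exact le_csSup hbddζ ⟨_, hηx, rfl⟩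
            · have h1 : f x ≤ d m :=
                le_trans (hval x hxa).2.2 (hdstrict.monotone (by omega))
              have h2 : pv (m+1) < G (m+1) 0 :=
                ((hG (m+1)).2.2.1 0 zero_le).2.1
              have h3 : G (m+1) 0 ≤ sSup (G (m+1) '' Iio (l - ξ (m+1))) :=
                le_csSup hbddζ ⟨0, hζlim.pos, rfl⟩
              exact le_trans h1 (le_trans (le_of_lt h2) h3)
          have hnel : (f '' Iio l).Nonempty := ⟨f 0, 0, hliml.pos, rfl⟩
          have hneζ : (G (m+1) '' Iio (l - ξ (m+1))).Nonempty :=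
            ⟨G (m+1) 0, 0, hζlim.pos, rfl⟩
          have hbddl : BddAbove (f '' Iio l) := ⟨sSup (G (m+1) '' Iio (l - ξ (m+1))), hupper⟩
          have heqs : sSup (f '' Iio l) = sSup (G (m+1) '' Iio (l - ξ (m+1))) :=
            le_antisymm (csSup_le hnel hupper) (csSup_le_csSup hbddl hneζ hsub)
          rw [hflval, heqs]
          exact (hG (m+1)).2.1 _ hζleB hζlim
    refine ⟨f, hmono, hcont, ?_, hfa⟩
    intro x hx
    rcases eq_or_lt_of_le hx with hxa | hxa
    · rw [hxa, hfa]
      exact ⟨hδS, hγ, le_rfl⟩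
    · obtain ⟨h1, h2, h3⟩ := hval x hxa
      exact ⟨h1, lt_of_le_of_lt (hγpv _) h2, le_trans h3 (hdlt _).le⟩


/-! ### From chains to homeomorphic copies -/

open Topology Filter in
theorem homeoCopy_of_chain {θ : Ordinal.{0}} {s : Set Ordinal.{0}} (f : Ordinal.{0} → Ordinal.{0})
    (hmono : StrictMonoOn f (Iio θ))
    (hcont : ∀ l < θ, l.IsLimit → f l = sSup (f '' Iio l))
    (hmem : ∀ x < θ, f x ∈ s) : HomeoCopy θ s := by
  classical
  set t : Set Ordinal.{0} := f '' Iio θ with ht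
  have hts : t ⊆ s := by rintro z ⟨x, hx, rfl⟩; exact hmem x hx
  refine ⟨t, hts, ?_⟩
  set e : ↥(Iio θ) → ↥t :=
    fun x => ⟨f x.1, ⟨x.1, x.2, rfl⟩⟩ with he
  have hbij : Function.Bijective e := by
    constructor
    · intro x y h
      have h2 : f x.1 = f y.1 := congrArg Subtype.val h
      exact Subtype.ext (hmono.injOn x.2 y.2 h2)
    · rintro ⟨z, hz⟩
      obtain ⟨x, hx, rfl⟩ := hz
      exact ⟨⟨x, hx⟩, rfl⟩
  set E := Equiv.ofBijective e hbij with hE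
  have hflim : ∀ x, x < θ → x.IsLimit → (f x).IsLimit := by
    intro x hx hxl
    have hsup : f x = sSup (f '' Iio x) := hcont x hx hxl
    have hne : (f '' Iio x).Nonempty := ⟨f 0, 0, hxl.pos, rfl⟩
    have h0θ : (0 : Ordinal.{0}) < θ := lt_of_le_of_lt (zero_le (a := x)) hx
    constructor
    · intro h0
      have h1 : f 0 < f x := hmono h0θ hx hxl.pos
      rw [h0] at h1
      exact not_lt_zero h1
    · intro z hz
      rw [hsup] at hz
      obtain ⟨w, hw, hzw⟩ := exists_lt_of_lt_csSup hne hz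
      obtain ⟨y, hy, rfl⟩ := hw
      have hy1 : Order.succ y < x := hxl.succ_lt hy
      have h2 : f y < f (Order.succ y) :=
        hmono (lt_trans hy hx) (lt_trans hy1 hx) (Order.lt_succ y)
      have h3 : f (Order.succ y) < f x := hmono (lt_trans hy1 hx) hx hy1
      exact lt_of_le_of_lt (Order.succ_le_of_lt hzw) (lt_trans h2 h3)
  have hcontF : Continuous (fun p : ↥(Iio θ) => f p.1) := by
    rw [continuous_iff_continuousAt]
    rintro ⟨x, hx⟩
    by_cases hxl : x.IsLimit
    · rw [ContinuousAt, Filter.tendsto_def]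
      intro U hU
      have hfxl : (f x).IsLimit := hflim x hx hxl
      obtain ⟨b, hb, hbU⟩ := (SuccOrder.hasBasis_nhds_Ioc_of_exists_lt ⟨0, pos_iff_ne_zero.2 hfxl.1⟩).mem_iff.1 hU
      have hsup : f x = sSup (f '' Iio x) := hcont x hx hxl
      have hne : (f '' Iio x).Nonempty := ⟨f 0, 0, hxl.pos, rfl⟩
      obtain ⟨w, hw, hbw⟩ := exists_lt_of_lt_csSup hne (hsup ▸ hb)
      obtain ⟨y, hy, rfl⟩ := hw
      have hV : (Subtype.val ⁻¹' (Ioo y (Order.succ x)) : Set ↥(Iio θ)) ∈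
          𝓝 (⟨x, hx⟩ : ↥(Iio θ)) := by
        apply IsOpen.mem_nhds (isOpen_Ioo.preimage continuous_subtype_val)
        exact ⟨hy, Order.lt_succ x⟩
      apply Filter.mem_of_superset hV
      rintro ⟨z, hz⟩ ⟨hyz, hzx⟩
      have hzx' : z ≤ x := Order.lt_succ_iff.1 hzx
      apply hbU
      constructor
      · exact lt_of_lt_of_le hbw (hmono.monotoneOn (Set.mem_Iio.mpr (lt_trans hy hx)) hz hyz.le)
      · exact hmono.monotoneOn hz hx hzx'
    · have hopen : IsOpen ({x} : Set Ordinal.{0}) := Ordinal.isOpen_singleton_iff.2 (mt Ordinal.isLimit_iff_isSuccLimit'.2 hxl)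
      have hsing : IsOpen ({⟨x, hx⟩} : Set ↥(Iio θ)) := by
        have h4 : ({⟨x, hx⟩} : Set ↥(Iio θ)) =
            Subtype.val ⁻¹' ({x} : Set Ordinal.{0}) := by
          ext ⟨z, hz⟩
          simp [Subtype.ext_iff]
        rw [h4]
        exact hopen.preimage continuous_subtype_val
      have hpure : 𝓝 (⟨x, hx⟩ : ↥(Iio θ)) ≤ pure ⟨x, hx⟩ :=
        le_pure_iff.2 (hsing.mem_nhds rfl)
      exact (tendsto_pure_nhds _ _).mono_left hpure
  have hcontE : Continuous E := hcontF.subtype_mk _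
  have hsymm : ∀ (z : Ordinal.{0}) (hz : z ∈ t) (x : Ordinal.{0}) (hx : x ∈ Iio θ),
      f x = z → E.symm ⟨z, hz⟩ = ⟨x, hx⟩ := by
    intro z hz x hx hfx
    rw [Equiv.symm_apply_eq]
    exact Subtype.ext hfx.symm
  have hcontInv : Continuous (E.symm : ↥t → ↥(Iio θ)) := by
    rw [continuous_iff_continuousAt]
    rintro ⟨z, hz⟩
    have hz2 := hz
    obtain ⟨x, hx, hfx⟩ := hz2
    by_cases hxl : x.IsLimit
    · rw [ContinuousAt, Filter.tendsto_def, hsymm z hz x hx hfx]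
      intro U hU
      obtain ⟨W, hW, hWU⟩ := (mem_nhds_subtype (Iio θ) _ _).1 hU
      obtain ⟨b, hb, hbW⟩ := (SuccOrder.hasBasis_nhds_Ioc_of_exists_lt ⟨0, pos_iff_ne_zero.2 hxl.1⟩).mem_iff.1 hW
      have hV : (Subtype.val ⁻¹' (Ioo (f b) (Order.succ z)) : Set ↥t) ∈
          𝓝 (⟨z, hz⟩ : ↥t) := by
        apply IsOpen.mem_nhds (isOpen_Ioo.preimage continuous_subtype_val)
        refine ⟨?_, Order.lt_succ z⟩
        show f b < z
        rw [← hfx]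
        exact hmono (lt_trans hb hx) hx hb
      apply Filter.mem_of_superset hV
      rintro ⟨z', hz'⟩ ⟨hbz', hz'z⟩
      have hz'2 := hz'
      obtain ⟨y, hy, hfy⟩ := hz'2
      have hby : b < y := by
        by_contra hcon
        push_neg at hcon
        have h5 : f y ≤ f b := hmono.monotoneOn hy (lt_trans hb hx) hcon
        rw [hfy] at h5
        exact absurd hbz' (not_lt.2 h5)
      have hyx : y ≤ x := by
        by_contra hcon
        push_neg at hcon
        have h5 : f x < f y := hmono hx hy hcon
        rw [hfy, hfx] at h5
        exact absurd (Order.lt_succ_iff.1 hz'z) (not_le.2 h5)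
      have hyW : y ∈ W := hbW ⟨hby, hyx⟩
      have h6 : E.symm ⟨z', hz'⟩ = ⟨y, hy⟩ := hsymm z' hz' y hy hfy
      rw [mem_preimage, h6]
      exact hWU hyW
    · have hiso : ({⟨z, hz⟩} : Set ↥t).Nonempty ∧
          IsOpen ({⟨z, hz⟩} : Set ↥t) := by
      -- we only need openness; nonempty trivial
        refine ⟨⟨_, rfl⟩, ?_⟩
        rcases (Ordinal.zero_or_succ_or_isSuccLimit x).imp_right (Or.imp_right Ordinal.isLimit_iff_isSuccLimit'.2) with h0 | ⟨w, hws⟩ | h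
        · -- x = 0 : O = Iio (z+1)
          have h4 : ({⟨z, hz⟩} : Set ↥t) =
              Subtype.val ⁻¹' (Iio (Order.succ z)) := by
            ext ⟨z', hz'⟩
            simp only [mem_singleton_iff, Subtype.ext_iff, mem_preimage, mem_Iio,
              Order.lt_succ_iff]
            constructor
            · rintro rfl; exact le_rfl
            · intro h5
              have hz'2 := hz'
              obtain ⟨y, hy, hfy⟩ := hz'2
              have : y ≤ x := by
                by_contra hcon
                push_neg at hcon
                have h6 : f x < f y := hmono hx hy hcon
                rw [hfy, hfx] at h6
                exact absurd h5 (not_le.2 h6)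
              have hy0 : y = 0 := by
                rw [h0] at this
                exact nonpos_iff_eq_zero.1 this
              rw [← hfy, hy0, ← hfx, h0]
          rw [h4]
          exact isOpen_Iio.preimage continuous_subtype_val
        · -- x = succ w
          have hwθ : w ∈ Iio θ := lt_trans (hws ▸ Order.lt_succ w) hx
          have h4 : ({⟨z, hz⟩} : Set ↥t) =
              Subtype.val ⁻¹' (Ioo (f w) (Order.succ z)) := by
            ext ⟨z', hz'⟩
            simp only [mem_singleton_iff, Subtype.ext_iff, mem_preimage, mem_Ioo,
              Order.lt_succ_iff]
            constructor
            · rintro rfl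
              refine ⟨?_, le_rfl⟩
              rw [← hfx]
              exact hmono hwθ hx (hws ▸ Order.lt_succ w)
            · rintro ⟨h5, h6⟩
              have hz'2 := hz'
              obtain ⟨y, hy, hfy⟩ := hz'2
              have hyx : y ≤ x := by
                by_contra hcon
                push_neg at hcon
                have h7 : f x < f y := hmono hx hy hcon
                rw [hfy, hfx] at h7
                exact absurd h6 (not_le.2 h7)
              have hwy : w < y := by
                by_contra hcon
                push_neg at hcon
                have h7 : f y ≤ f w := hmono.monotoneOn hy hwθ hcon
                rw [hfy] at h7
                exact absurd h5 (not_lt.2 h7)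
              have hxy : y = x := le_antisymm hyx (by rw [← hws]; exact Order.succ_le_of_lt hwy)
              rw [← hfy, hxy, hfx]
          rw [h4]
          exact isOpen_Ioo.preimage continuous_subtype_val
        · exact absurd h hxl
      have hpure : 𝓝 (⟨z, hz⟩ : ↥t) ≤ pure ⟨z, hz⟩ :=
        le_pure_iff.2 (hiso.2.mem_nhds rfl)
      exact (tendsto_pure_nhds _ _).mono_left hpure
  exact ⟨⟨E, hcontE, hcontInv⟩⟩

/-- From a stationary set of cofinality-`ω` points, extract a copy of any countable `θ`. -/
theorem homeoCopy_target {v : Ordinal.{0}} (hv : ℵ₀ < v.cof) {S : Set Ordinal.{0}}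
    (hS : S ⊆ {x | x < v ∧ x.cof = ℵ₀}) (hstat : StationaryIn S v)
    {θ : Ordinal.{0}} (hθc : θ.card ≤ ℵ₀) {s : Set Ordinal.{0}} (hSs : S ⊆ s) :
    HomeoCopy θ s := by
  rcases (Ordinal.zero_or_succ_or_isSuccLimit θ).imp_right (Or.imp_right Ordinal.isLimit_iff_isSuccLimit'.2) with rfl | ⟨b, rfl⟩ | hlim
  · refine ⟨∅, empty_subset s, ⟨?_⟩⟩
    have h0 : (Iio (0 : Ordinal.{0}) : Set Ordinal.{0}) = ∅ := by
      ext x; simp [not_lt_zero]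
    rw [h0]
    exact Homeomorph.refl _
  · have hbc : b.card ≤ ℵ₀ := le_trans (Ordinal.card_le_card (Order.le_succ b)) hθc
    obtain ⟨δ, hδ⟩ := stationary_nonempty hv (stationary_Tset hv hS hstat b hbc)
    have hδS : δ ∈ S := (mem_Tset.1 hδ).1
    have hδpos : 0 < δ := (Ordinal.aleph0_le_cof.1 (by rw [(hS hδS).2])).pos
    obtain ⟨g, hg⟩ := (mem_Tset.1 hδ).2 0 hδpos
    apply homeoCopy_of_chain g
    · intro x hx y hy hxy
      exact hg.1 (Set.mem_Iic.mpr (Order.lt_succ_iff.1 hx))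
        (Set.mem_Iic.mpr (Order.lt_succ_iff.1 hy)) hxy
    · intro l hl hll
      exact hg.2.1 l (Order.lt_succ_iff.1 hl) hll
    · intro x hx
      exact hSs (hg.2.2.1 x (Order.lt_succ_iff.1 hx)).1
  · obtain ⟨δ, hδ⟩ := stationary_nonempty hv (stationary_Tset hv hS hstat θ hθc)
    have hδS : δ ∈ S := (mem_Tset.1 hδ).1
    have hδpos : 0 < δ := (Ordinal.aleph0_le_cof.1 (by rw [(hS hδS).2])).pos
    obtain ⟨g, hg⟩ := (mem_Tset.1 hδ).2 0 hδpos
    apply homeoCopy_of_chain g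
    · exact hg.1.mono Iio_subset_Iic_self
    · intro l hl hll
      exact hg.2.1 l hl.le hll
    · intro x hx
      exact hSs (hg.2.2.1 x hx.le).1

end TopPHAux




/-- For infinitely many countable ordinals `αᵢ ≥ 2`, `P^top(αᵢ)_{i∈κ} = κ⁺`. -/
theorem topPH_infinite_countable {ι : Type} (hι : ℵ₀ ≤ Cardinal.mk ι)
    (α : ι → Ordinal.{0}) (h2 : ∀ i, 2 ≤ α i) (hc : ∀ i, α i < ω₁) :
    IsLeast {β : Ordinal.{0} | TopPHFam β α} (Order.succ (Cardinal.mk ι)).ord := by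
  classical
  have hne : Nonempty ι := Cardinal.mk_ne_zero_iff.1
    (ne_of_gt (lt_of_lt_of_le Cardinal.aleph0_pos hι))
  set v : Ordinal.{0} := (Order.succ (Cardinal.mk ι)).ord with hvdef
  have hreg : (Order.succ (Cardinal.mk ι)).IsRegular := Cardinal.isRegular_succ hι
  have hcof : v.cof = Order.succ (Cardinal.mk ι) := hreg.cof_eq
  have hv : ℵ₀ < v.cof := by
    rw [hcof]
    exact lt_of_le_of_lt hι (Order.lt_succ _)
  constructor
  · -- v satisfies the pigeonhole relation
    intro c
    have hι2 : #ι < v.cof := by rw [hcof]; exact Order.lt_succ _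
    obtain ⟨i, hstat⟩ := TopPHAux.exists_stationary_fiber hv hι2 c
    refine ⟨i, ?_⟩
    have hcard : (α i).card ≤ ℵ₀ := by
      have h1 : α i < ω₁ := hc i
      rw [← Cardinal.ord_aleph 1] at h1
      have h2 : (α i).card < ℵ_ 1 := Cardinal.lt_ord.1 h1
      rwa [← Cardinal.succ_aleph0, Order.lt_succ_iff] at h2
    refine TopPHAux.homeoCopy_target hv (inter_subset_left) hstat hcard ?_
    rintro x ⟨⟨hx1, _⟩, hx2⟩
    exact ⟨hx1, hx2⟩
  · -- lower bound
    intro β hβ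
    by_contra hcon
    push_neg at hcon
    have hcard : β.card ≤ Cardinal.mk ι := Order.lt_succ_iff.1 (Cardinal.lt_ord.1 hcon)
    have h3 : Cardinal.lift.{0} #(Iio β : Set Ordinal.{0}) ≤ Cardinal.lift.{1} #ι := by
      rw [Ordinal.mk_Iio_ordinal]
      rw [Cardinal.lift_lift]
      exact Cardinal.lift_le.2 hcard
    obtain ⟨j⟩ := Cardinal.lift_mk_le'.1 h3
    set c : Ordinal.{0} → ι := fun x => if h : x < β then j ⟨x, h⟩ else Classical.arbitrary ι
      with hcdef
    obtain ⟨i, t, hts, ⟨e⟩⟩ := hβ c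
    have h0 : (0 : Ordinal.{0}) < α i :=
      lt_of_lt_of_le (by exact_mod_cast Nat.cast_pos.2 (by norm_num : (0:ℕ) < 2)) (h2 i)
    have h1 : (1 : Ordinal.{0}) < α i := by
      refine lt_of_lt_of_le ?_ (h2 i)
      have := Nat.cast_lt (α := Ordinal.{0}) (m := 1) (n := 2)
      simpa using this.2 (by norm_num)
    set p0 := e ⟨0, h0⟩ with hp0def
    set p1 := e ⟨1, h1⟩ with hp1def
    have hne01 : (p0 : Ordinal.{0}) ≠ (p1 : Ordinal.{0}) := by
      intro h
      have h4 : p0 = p1 := Subtype.ext h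
      have h5 := e.toEquiv.injective h4
      have h6 : (0 : Ordinal.{0}) = 1 := congrArg Subtype.val h5
      exact zero_ne_one h6
    have hp0 := hts p0.2
    have hp1 := hts p1.2
    have hc0 : c (p0 : Ordinal.{0}) = i := hp0.2
    have hc1 : c (p1 : Ordinal.{0}) = i := hp1.2
    simp only [hcdef] at hc0 hc1
    rw [dif_pos (Set.mem_Iio.1 hp0.1)] at hc0
    rw [dif_pos (Set.mem_Iio.1 hp1.1)] at hc1
    have h7 : j ⟨(p0 : Ordinal.{0}), Set.mem_Iio.1 hp0.1⟩ = j ⟨(p1 : Ordinal.{0}), Set.mem_Iio.1 hp1.1⟩ := by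
      rw [hc0, hc1]
    have h8 : (p0 : Ordinal.{0}) = (p1 : Ordinal.{0}) := congrArg (fun q : ↥(Iio β : Set Ordinal.{0}) => (q : Ordinal.{0})) (j.injective h7)
    exact hne01 h8

end
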